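/- (Standardization compatibility of insertion) Let T be a semistandard (X,λ)-tableau and T• a •-standardization of T. Let y ∈ X• satisfy: x ≺ y for every x occurring in T• with the same underlying letter as y, if ε + parity(y) = 0; and x ≻ y for all such x, if ε + parity(y) = 1. Then (T• ←ε y) is a •-standardization of (T ←ε ŷ), where ŷ is the underlying letter of y, and the two insertions have identical bumped node sequences. -/

import Mathlib

namespace SuperRSK

variable {X Y : Type*}

/-- The super order `≺` on a superalphabet: `a ≺ b` iff (`a` odd, `b` even), or
(both even and `a < b`), or (both odd and `a > b`). Odd means parity `true`. -/
def SuperPrec [LinearOrder X] (par : X → Bool) (a b : X) : Prop :=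
  (par a = true ∧ par b = false) ∨
  (par a = false ∧ par b = false ∧ a < b) ∨
  (par a = true ∧ par b = true ∧ b < a)

/-- The `δ`-coordinate of a node: row if `δ = false`, column if `δ = true`. -/
def coord (δ : Bool) (u : ℕ × ℕ) : ℕ := if δ then u.2 else u.1

/-- A tableau is a function `ℕ × ℕ → WithTop X`, equal to `⊤` outside its diagram.
Semistandard: the support is a Young diagram and entries are non-decreasing
(both encoded by monotonicity into `WithTop X`), equal entries in a row are even,
and equal entries in a column are odd. -/
def IsSStd [LinearOrder X] (par : X → Bool) (T : ℕ × ℕ → WithTop X) : Prop :=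
  (∀ u v : ℕ × ℕ, u.1 ≤ v.1 → u.2 ≤ v.2 → T u ≤ T v) ∧
  (∀ u v : ℕ × ℕ, ∀ a : X, u.1 = v.1 → u.2 < v.2 → T u = (a : WithTop X) →
    T v = (a : WithTop X) → par a = false) ∧
  (∀ u v : ℕ × ℕ, ∀ a : X, u.2 = v.2 → u.1 < v.1 → T u = (a : WithTop X) →
    T v = (a : WithTop X) → par a = true)

/-- A standard tableau: semistandard with no repeated letters. -/
def IsStd [LinearOrder X] (par : X → Bool) (T : ℕ × ℕ → WithTop X) : Prop :=
  IsSStd par T ∧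
  ∀ u v : ℕ × ℕ, ∀ a : X, T u = (a : WithTop X) → T v = (a : WithTop X) → u = v

/-- The comparison used in `ε`-insertion: strict for `ε = false`, weak for `ε = true`. -/
def cmpIns [LinearOrder X] (ε : Bool) (x : X) (v : WithTop X) : Prop :=
  if ε then (x : WithTop X) ≤ v else (x : WithTop X) < v

/-- The comparison used in `ε`-extraction: strict for `ε = false`, weak for `ε = true`. -/
def cmpExt [LinearOrder X] (ε : Bool) (y : X) (v : WithTop X) : Prop :=
  if ε then v ≤ (y : WithTop X) else v < (y : WithTop X)

/-- `BumpSeq ε par T x b xs m` says `b 0, …, b (m-1)` is the bumped node sequence and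
`xs 0, …, xs (m-1)` the bumped letter sequence for the `ε`-insertion of `x` into `T`:
`xs 0 = x`; at step `j` the current letter `xs j` is placed at the smallest node `b j`
of the `i`-th row (if `ε + parity (xs j) = 0`) or column (if `= 1`) satisfying the
`ε`-comparison, where `i = 0` at the start and afterwards is one more than the
corresponding coordinate of the previous bumped node; the bumped letter becomes the
next inserted letter, until an empty node (`⊤`) is reached. -/
def BumpSeq [LinearOrder X] (ε : Bool) (par : X → Bool) (T : ℕ × ℕ → WithTop X)
    (x : X) (b : ℕ → ℕ × ℕ) (xs : ℕ → X) (m : ℕ) : Prop :=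
  0 < m ∧ xs 0 = x ∧
  (∀ j, j + 1 < m → T (b j) = (xs (j + 1) : WithTop X)) ∧
  T (b (m - 1)) = ⊤ ∧
  ∀ j, j < m →
    (coord (Bool.xor ε (par (xs j))) (b j) =
      (if j = 0 then 0 else coord (Bool.xor ε (par (xs j))) (b (j - 1)) + 1)) ∧
    cmpIns ε (xs j) (T (b j)) ∧
    ∀ v : ℕ × ℕ,
      coord (Bool.xor ε (par (xs j))) v = coord (Bool.xor ε (par (xs j))) (b j) →
      cmpIns ε (xs j) (T v) →
      coord (!(Bool.xor ε (par (xs j)))) (b j) ≤ coord (!(Bool.xor ε (par (xs j)))) v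

/-- `InsResult T b xs m R` says `R` is the tableau obtained from `T` by the insertion
with bumped nodes `b` and bumped letters `xs`: `R (b k) = xs k` and `R` agrees with `T`
elsewhere. -/
def InsResult [LinearOrder X] (T : ℕ × ℕ → WithTop X) (b : ℕ → ℕ × ℕ) (xs : ℕ → X)
    (m : ℕ) (R : ℕ × ℕ → WithTop X) : Prop :=
  (∀ k, k < m → R (b k) = (xs k : WithTop X)) ∧
  ∀ u : ℕ × ℕ, (∀ k, k < m → u ≠ b k) → R u = T u

/-- `ExtractSeq ε par T u c ys m` says `c 0, …, c (m-1)` is the unbumped node sequence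
and `ys 0, …, ys (m-1)` the unbumped letter sequence for the `ε`-extraction at `u`:
`c 0 = u`, `ys 0 = T u`; at each step `c (j+1)` is the greatest node, in the row/column
(according to `ε` plus the parity of `ys j`) preceding that of `c j`, whose entry is
`ε`-below `ys j`; the process stops upon reaching the first row/column. -/
def ExtractSeq [LinearOrder X] (ε : Bool) (par : X → Bool) (T : ℕ × ℕ → WithTop X)
    (u : ℕ × ℕ) (c : ℕ → ℕ × ℕ) (ys : ℕ → X) (m : ℕ) : Prop :=
  0 < m ∧ c 0 = u ∧ T u = (ys 0 : WithTop X) ∧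
  (∀ j, j + 1 < m →
    0 < coord (Bool.xor ε (par (ys j))) (c j) ∧
    coord (Bool.xor ε (par (ys j))) (c (j + 1)) + 1 =
      coord (Bool.xor ε (par (ys j))) (c j) ∧
    T (c (j + 1)) = (ys (j + 1) : WithTop X) ∧
    cmpExt ε (ys j) (T (c (j + 1))) ∧
    ∀ v : ℕ × ℕ,
      coord (Bool.xor ε (par (ys j))) v + 1 = coord (Bool.xor ε (par (ys j))) (c j) →
      cmpExt ε (ys j) (T v) →
      coord (!(Bool.xor ε (par (ys j)))) v ≤ coord (!(Bool.xor ε (par (ys j)))) (c (j + 1))) ∧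
  coord (Bool.xor ε (par (ys (m - 1)))) (c (m - 1)) = 0

/-- `ExtResult T c ys m R` says `R` is the tableau obtained from `T` by the extraction
with unbumped nodes `c` and letters `ys`: each `c k` (`k ≥ 1`) receives `ys (k-1)`, the
initial node `c 0` is emptied, and `R` agrees with `T` elsewhere. -/
def ExtResult [LinearOrder X] (T : ℕ × ℕ → WithTop X) (c : ℕ → ℕ × ℕ) (ys : ℕ → X)
    (m : ℕ) (R : ℕ × ℕ → WithTop X) : Prop :=
  (∀ k, 0 < k → k < m → R (c k) = (ys (k - 1) : WithTop X)) ∧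
  (∀ v : ℕ × ℕ, (∀ k, k < m → v ≠ c k) → R v = T v) ∧
  ((∀ k, 0 < k → k < m → c 0 ≠ c k) → R (c 0) = ⊤)

/-- The parity function on the standardizing alphabet `X• = X ×ₗ ℕ` (with the
lexicographic order): superscripts do not change parity. -/
def bpar (par : X → Bool) (p : X ×ₗ ℕ) : Bool := par (ofLex p).1

/-- `U` is a `•`-standardization of `T`: `U` is a standard tableau over the
standardizing alphabet, forgetting superscripts in `U` yields the semistandard
tableau `T`, and whenever `u ↗ v` are distinct nodes with `T u = T v`, then
`U u ≺ U v` in the super order on `X•`. -/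
def IsBulletStd [LinearOrder X] (par : X → Bool)
    (U : ℕ × ℕ → WithTop (X ×ₗ ℕ)) (T : ℕ × ℕ → WithTop X) : Prop :=
  IsStd (bpar par) U ∧
  IsSStd par T ∧
  (∀ u : ℕ × ℕ, (U u).map (fun p => (ofLex p).1) = T u) ∧
  (∀ u v : ℕ × ℕ, ∀ p q : X ×ₗ ℕ, u ≠ v → v.1 ≤ u.1 → u.2 ≤ v.2 →
     U u = (p : WithTop (X ×ₗ ℕ)) → U v = (q : WithTop (X ×ₗ ℕ)) →
     (ofLex p).1 = (ofLex q).1 → SuperPrec (bpar par) p q)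

section Aux
variable {A : Type*} [LinearOrder A]

/-- point with `coord d = i` and `coord (!d) = j`. -/
def pt (d : Bool) (i j : ℕ) : ℕ × ℕ := if d then (j, i) else (i, j)

lemma coord_pt (d : Bool) (i j : ℕ) : coord d (pt d i j) = i := by
  cases d <;> rfl

lemma coord_pt' (d : Bool) (i j : ℕ) : coord (!d) (pt d i j) = j := by
  cases d <;> rfl

lemma eq_of_coord {d : Bool} {u v : ℕ × ℕ} (h1 : coord d u = coord d v)
    (h2 : coord (!d) u = coord (!d) v) : u = v := by
  cases d
  · exact Prod.ext h1 h2
  · exact Prod.ext h2 h1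

lemma bool_ne {a c : Bool} (h : a ≠ c) : a = !c := by
  cases a <;> cases c <;> simp_all

lemma bool_ne_not (a : Bool) : a ≠ !a := by cases a <;> simp

lemma exists_or (b : ℕ → ℕ × ℕ) (m : ℕ) (u : ℕ × ℕ) :
    (∃ k, k < m ∧ u = b k) ∨ (∀ k, k < m → u ≠ b k) := by
  by_cases hx : ∃ k, k < m ∧ u = b k
  · exact Or.inl hx
  · right; intro k hk he; exact hx ⟨k, hk, he⟩

lemma coord_false (u : ℕ × ℕ) : coord false u = u.1 := rfl
lemma coord_true (u : ℕ × ℕ) : coord true u = u.2 := rfl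

lemma coord_mono (e : Bool) {u v : ℕ × ℕ} (h1 : u.1 ≤ v.1) (h2 : u.2 ≤ v.2) :
    coord e u ≤ coord e v := by
  cases e <;> simpa [coord]

variable {par : A → Bool} {T : ℕ × ℕ → WithTop A}

lemma mono' (hT : IsSStd par T) (d : Bool) {u v : ℕ × ℕ} (h1 : coord d u ≤ coord d v)
    (h2 : coord (!d) u ≤ coord (!d) v) : T u ≤ T v := by
  cases d
  · exact hT.1 u v h1 h2
  · exact hT.1 u v h2 h1

lemma line_par (hT : IsSStd par T) (e : Bool) {u v : ℕ × ℕ} {a : A}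
    (h1 : coord e u = coord e v) (h2 : coord (!e) u < coord (!e) v)
    (hu : T u = (a : WithTop A)) (hv : T v = (a : WithTop A)) : par a = e := by
  cases e
  · exact hT.2.1 u v a h1 h2 hu hv
  · exact hT.2.2 u v a h1 h2 hu hv

lemma noSE (hT : IsSStd par T) {u v : ℕ × ℕ} {a : A}
    (hu : T u = (a : WithTop A)) (hv : T v = (a : WithTop A))
    (h1 : u.1 < v.1) (h2 : u.2 < v.2) : False := by
  have l1 : T u ≤ T (u.1, v.2) := hT.1 _ _ le_rfl h2.le
  have l2 : T (u.1, v.2) ≤ T v := hT.1 _ _ h1.le le_rfl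
  have hz : T (u.1, v.2) = (a : WithTop A) := le_antisymm (by rw [← hv]; exact l2) (by rw [← hu]; exact l1)
  have heven : par a = false := hT.2.1 u (u.1, v.2) a rfl h2 hu hz
  have hodd : par a = true := hT.2.2 (u.1, v.2) v a rfl h1 hz hv
  simp [heven] at hodd

lemma noSE' (hT : IsSStd par T) (d : Bool) {u v : ℕ × ℕ} {a : A}
    (hu : T u = (a : WithTop A)) (hv : T v = (a : WithTop A))
    (h1 : coord d u < coord d v) (h2 : coord (!d) u < coord (!d) v) : False := by
  cases d
  · exact noSE hT hu hv h1 h2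
  · exact noSE hT hu hv h2 h1

lemma cmpIns_le {ε : Bool} {x : A} {v : WithTop A} (h : cmpIns ε x v) :
    (x : WithTop A) ≤ v := by
  cases ε
  · exact (by simpa [cmpIns] using h : (x : WithTop A) < v).le
  · simpa [cmpIns] using h

lemma cmpIns_top (ε : Bool) (x : A) : cmpIns ε x (⊤ : WithTop A) := by
  cases ε <;> simp [cmpIns]

lemma le_of_not_cmpIns {ε : Bool} {x : A} {v : WithTop A} (h : ¬ cmpIns ε x v) :
    v ≤ (x : WithTop A) := by
  cases ε
  · exact not_lt.mp (by simpa [cmpIns] using h)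
  · exact (not_le.mp (by simpa [cmpIns] using h)).le

lemma cmpIns_of_lt {ε : Bool} {x : A} {v : WithTop A} (h : (x : WithTop A) < v) :
    cmpIns ε x v := by
  cases ε <;> simp [cmpIns] <;> [exact h; exact h.le]

variable {ε : Bool} {x : A} {b : ℕ → ℕ × ℕ} {xs : ℕ → A} {m : ℕ}

lemma BumpSeq.pos (h : BumpSeq ε par T x b xs m) : 0 < m := h.1
lemma BumpSeq.x0 (h : BumpSeq ε par T x b xs m) : xs 0 = x := h.2.1
lemma BumpSeq.bump (h : BumpSeq ε par T x b xs m) {j : ℕ} (hj : j + 1 < m) :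
    T (b j) = (xs (j + 1) : WithTop A) := h.2.2.1 j hj
lemma BumpSeq.top (h : BumpSeq ε par T x b xs m) : T (b (m - 1)) = ⊤ := h.2.2.2.1
lemma BumpSeq.idx (h : BumpSeq ε par T x b xs m) {j : ℕ} (hj : j < m) :
    coord (Bool.xor ε (par (xs j))) (b j) =
      (if j = 0 then 0 else coord (Bool.xor ε (par (xs j))) (b (j - 1)) + 1) :=
  (h.2.2.2.2 j hj).1
lemma BumpSeq.cmp (h : BumpSeq ε par T x b xs m) {j : ℕ} (hj : j < m) :
    cmpIns ε (xs j) (T (b j)) := (h.2.2.2.2 j hj).2.1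
lemma BumpSeq.min (h : BumpSeq ε par T x b xs m) {j : ℕ} (hj : j < m) :
    ∀ v : ℕ × ℕ,
      coord (Bool.xor ε (par (xs j))) v = coord (Bool.xor ε (par (xs j))) (b j) →
      cmpIns ε (xs j) (T v) →
      coord (!(Bool.xor ε (par (xs j)))) (b j) ≤ coord (!(Bool.xor ε (par (xs j)))) v :=
  (h.2.2.2.2 j hj).2.2

lemma BumpSeq.idxS (h : BumpSeq ε par T x b xs m) {j : ℕ} (hj : j < m) (h0 : j ≠ 0) :
    coord (Bool.xor ε (par (xs j))) (b j) =
      coord (Bool.xor ε (par (xs j))) (b (j - 1)) + 1 := by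
  have := h.idx hj; rwa [if_neg h0] at this

lemma BumpSeq.idx0 (h : BumpSeq ε par T x b xs m) :
    coord (Bool.xor ε (par (xs 0))) (b 0) = 0 := by
  have := h.idx h.pos; rwa [if_pos rfl] at this

lemma bump_pred (h : BumpSeq ε par T x b xs m) {k : ℕ} (hk : k < m) (h0 : k ≠ 0) :
    T (b (k - 1)) = (xs k : WithTop A) := by
  have := h.bump (j := k - 1) (by omega)
  rwa [show k - 1 + 1 = k by omega] at this

lemma xs_le (h : BumpSeq ε par T x b xs m) : ∀ {k l : ℕ}, k ≤ l → l < m → xs k ≤ xs l := by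
  intro k l hkl hl
  induction l, hkl using Nat.le_induction with
  | base => exact le_rfl
  | succ l hkl ih =>
    refine le_trans (ih (by omega)) ?_
    have := h.cmp (show l < m by omega)
    rw [h.bump hl] at this
    exact WithTop.coe_le_coe.mp (cmpIns_le this)

lemma xs_lt_false (h : BumpSeq ε par T x b xs m) (hε : ε = false) :
    ∀ {k l : ℕ}, k < l → l < m → xs k < xs l := by
  intro k l hkl hl
  have h1 : xs k < xs (k + 1) := by
    have := h.cmp (show k < m by omega)
    rw [h.bump (show k + 1 < m by omega), hε] at this
    exact WithTop.coe_lt_coe.mp (by simpa [cmpIns] using this)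
  exact lt_of_lt_of_le h1 (xs_le h (by omega) hl)

lemma chain_lt (h : BumpSeq ε par T x b xs m) {lo hi : ℕ} {e : Bool} (hlh : lo < hi)
    (hhi : hi < m) (hconst : ∀ j, lo + 1 ≤ j → j ≤ hi → Bool.xor ε (par (xs j)) = e) :
    coord e (b lo) < coord e (b hi) := by
  have haux : ∀ t, lo + t ≤ hi → coord e (b lo) + t ≤ coord e (b (lo + t)) := by
    intro t
    induction t with
    | zero => simp
    | succ t ih =>
      intro ht
      have h1 := ih (by omega)
      have hd := hconst (lo + t + 1) (by omega) (by omega)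
      have h2 := h.idxS (show lo + t + 1 < m by omega) (by omega)
      rw [hd] at h2
      have h3 : lo + t + 1 - 1 = lo + t := by omega
      rw [h3] at h2
      rw [show lo + (t + 1) = lo + t + 1 by omega]
      omega
  have := haux (hi - lo) (by omega)
  rw [show lo + (hi - lo) = hi by omega] at this
  omega

lemma prev_le (hT : IsSStd par T) (h : BumpSeq ε par T x b xs m) {k : ℕ}
    (hk : k < m) (h0 : k ≠ 0) :
    coord (!(Bool.xor ε (par (xs k)))) (b k) ≤ coord (!(Bool.xor ε (par (xs k)))) (b (k - 1)) := by
  set d := Bool.xor ε (par (xs k)) with hd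
  have hbk1 : T (b (k - 1)) = (xs k : WithTop A) := bump_pred h hk h0
  set z := pt d (coord d (b (k - 1)) + 1) (coord (!d) (b (k - 1))) with hz
  have hz1 : coord d z = coord d (b k) := by rw [hz, coord_pt, h.idxS hk h0]
  have hle : (xs k : WithTop A) ≤ T z := by
    rw [← hbk1]
    exact mono' hT d (by rw [hz, coord_pt]; omega) (by rw [hz, coord_pt'])
  have hcmp : cmpIns ε (xs k) (T z) := by
    cases hε : ε
    · refine cmpIns_of_lt (lt_of_le_of_ne hle ?_)
      intro heq
      have hp : par (xs k) = !d := by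
        refine line_par hT (!d) (u := b (k - 1)) (v := z) (by rw [hz, coord_pt']) ?_ hbk1 heq.symm
        simp only [Bool.not_not, hz, coord_pt]
        omega
      have hdd : d = par (xs k) := by rw [hd, hε]; simp
      rw [hdd] at hp
      simp at hp
    · exact by simpa [cmpIns] using hle
  have := h.min hk z hz1 hcmp
  rwa [hz, coord_pt'] at this

lemma before (hT : IsSStd par T) (h : BumpSeq ε par T x b xs m) {k : ℕ} {v : ℕ × ℕ}
    (hk : k < m) (hv : T v = (xs k : WithTop A))
    (hline : coord (Bool.xor ε (par (xs k))) v + 1 = coord (Bool.xor ε (par (xs k))) (b k)) :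
    k ≠ 0 ∧ coord (!(Bool.xor ε (par (xs k)))) (b (k - 1)) ≤ coord (!(Bool.xor ε (par (xs k)))) v := by
  set d := Bool.xor ε (par (xs k)) with hd
  have h0 : k ≠ 0 := by
    intro h0; subst h0
    have := h.idx0
    rw [← hd] at this
    omega
  refine ⟨h0, ?_⟩
  by_contra hc
  push_neg at hc
  have hidx := h.idxS hk h0
  rw [← hd] at hidx
  have hdl : coord d v = coord d (b (k - 1)) := by omega
  have hbk1 : T (b (k - 1)) = (xs k : WithTop A) := bump_pred h hk h0
  have hpar : par (xs k) = d := line_par hT d hdl hc hv hbk1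
  have hε : ε = false := by
    have hd2 := hd
    rw [hpar] at hd2
    cases hE : ε
    · rfl
    · rw [hE] at hd2; simp at hd2
  have hkm1 : k - 1 < m := by omega
  have hxlt : xs (k - 1) < xs k := by
    have := h.cmp hkm1
    rw [bump_pred h hk h0, hε] at this
    exact WithTop.coe_lt_coe.mp (by simpa [cmpIns] using this)
  set e := Bool.xor ε (par (xs (k - 1))) with he2
  by_cases hed : e = d
  · have := h.min hkm1 v (by rw [← he2, hed, hdl]) (by
      rw [hv, hε]; simp only [cmpIns, if_neg (Bool.false_ne_true ∘ Eq.symm)]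
      exact WithTop.coe_lt_coe.mpr hxlt)
    rw [← he2, hed] at this
    omega
  · have hed' : e = !d := bool_ne hed
    have h00 : k - 1 ≠ 0 := by
      intro h00
      have := h.idx0
      rw [← h00, ← he2, hed'] at this
      omega
    have hidx2 := h.idxS hkm1 h00
    rw [← he2, hed'] at hidx2
    rw [show k - 1 - 1 = k - 2 by omega] at hidx2
    have hbk2 : T (b (k - 2)) = (xs (k - 1) : WithTop A) := by
      have := h.bump (j := k - 2) (show k - 2 + 1 < m by omega)
      rwa [show k - 2 + 1 = k - 1 by omega] at this
    set z0 := pt d (coord d (b (k - 1))) (coord (!d) (b (k - 1)) - 1) with hz0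
    have hz0d : coord d z0 = coord d (b (k - 1)) := by rw [hz0, coord_pt]
    have hz0d' : coord (!d) z0 = coord (!d) (b (k - 1)) - 1 := by rw [hz0, coord_pt']
    have hz0v : T z0 = (xs k : WithTop A) := by
      refine le_antisymm ?_ ?_
      · rw [← hbk1]; exact mono' hT d (by omega) (by omega)
      · rw [← hv]; exact mono' hT d (by omega) (by omega)
    have hr2 : coord d (b (k - 2)) < coord d (b (k - 1)) := by
      by_contra hge
      push_neg at hge
      have hlez : T z0 ≤ T (b (k - 2)) := by
        refine mono' hT (!d) (by omega) ?_
        simp only [Bool.not_not]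
        omega
      rw [hz0v, hbk2] at hlez
      exact absurd (WithTop.coe_le_coe.mp hlez) (not_le.mpr hxlt)
    set z1 := pt (!d) (coord (!d) (b (k - 1))) (coord d (b (k - 2))) with hz1
    have hz1a : coord (!d) z1 = coord (!d) (b (k - 1)) := by rw [hz1, coord_pt]
    have hz1b : coord d z1 = coord d (b (k - 2)) := by
      have := coord_pt' (!d) (coord (!d) (b (k - 1))) (coord d (b (k - 2)))
      rw [Bool.not_not] at this
      rw [hz1]
      exact this
    have hncmp : ¬ cmpIns ε (xs (k - 1)) (T z1) := by
      intro hcmp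
      have := h.min hkm1 z1 (by rw [← he2, hed']; exact hz1a) hcmp
      rw [← he2, hed'] at this
      simp only [Bool.not_not] at this
      omega
    have hz1v : T z1 = (xs (k - 1) : WithTop A) := by
      refine le_antisymm (le_of_not_cmpIns hncmp) ?_
      rw [← hbk2]
      refine mono' hT (!d) (by omega) ?_
      simp only [Bool.not_not]
      omega
    have hpar2 : par (xs (k - 1)) = d := by
      refine line_par hT d (u := b (k - 2)) (v := z1) (by omega) (by omega) hbk2 hz1v
    have : e = d := by rw [he2, hε]; simpa using hpar2
    exact hed this

lemma sstd_ins (hT : IsSStd par T) (h : BumpSeq ε par T x b xs m) {R : ℕ × ℕ → WithTop A}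
    (hR : InsResult T b xs m R) : IsSStd par R := by
  have hRT : ∀ u, R u ≤ T u := by
    intro u
    rcases exists_or b m u with ⟨k, hk, rfl⟩ | ho
    · rw [hR.1 k hk]; exact cmpIns_le (h.cmp hk)
    · rw [hR.2 u ho]
  have mono1 : ∀ u v : ℕ × ℕ, u.1 ≤ v.1 → u.2 ≤ v.2 → R u ≤ R v := by
    intro u v h1 h2
    rcases exists_or b m v with ⟨k, hk, rfl⟩ | hov
    · by_cases huv : u = b k
      · exact le_of_eq (by rw [huv])
      rw [hR.1 k hk]
      rcases exists_or b m u with ⟨l, hl, rfl⟩ | hou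
      · rw [hR.1 l hl]
        rcases le_or_gt l k with hlk | hkl
        · exact WithTop.coe_le_coe.mpr (xs_le h hlk hk)
        · exfalso
          have hTle : T (b l) ≤ T (b k) := hT.1 _ _ h1 h2
          have hk1 : k + 1 < m := by omega
          rcases lt_or_eq_of_le (show l + 1 ≤ m from hl) with hl1 | hl1
          · rw [h.bump hl1, h.bump hk1, WithTop.coe_le_coe] at hTle
            have heq : xs (k + 1) = xs (l + 1) := le_antisymm (xs_le h (by omega) hl1) hTle
            cases hε : ε
            · have := xs_lt_false h hε (show k + 1 < l + 1 by omega) hl1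
              rw [heq] at this
              exact lt_irrefl _ this
            · have hconst : ∀ j, k + 1 ≤ j → j ≤ l + 1 → xs j = xs (k + 1) := by
                intro j hj1 hj2
                exact le_antisymm (by rw [heq]; exact xs_le h hj2 hl1) (xs_le h hj1 (by omega))
              have hchain := chain_lt h (e := Bool.xor ε (par (xs (k + 1)))) hkl hl
                (fun j hj1 hj2 => by rw [hconst j hj1 (by omega)])
              have := coord_mono (Bool.xor ε (par (xs (k + 1)))) h1 h2
              omega
          · have hop : T (b l) = ⊤ := by rw [show l = m - 1 by omega]; exact h.top
            rw [hop, h.bump hk1, top_le_iff] at hTle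
            exact WithTop.coe_ne_top hTle
      · rw [hR.2 u hou]
        set d := Bool.xor ε (par (xs k)) with hd
        have hud : coord d u ≤ coord d (b k) := coord_mono d h1 h2
        have hud' : coord (!d) u ≤ coord (!d) (b k) := coord_mono (!d) h1 h2
        rcases eq_or_lt_of_le hud with he | hlt
        · have hne : coord (!d) u < coord (!d) (b k) :=
            lt_of_le_of_ne hud' (fun hh => huv (eq_of_coord he hh))
          have hnc : ¬ cmpIns ε (xs k) (T u) := by
            intro hcm
            have := h.min hk u (by rw [← hd]; exact he) hcm
            rw [← hd] at this
            omega
          exact le_of_not_cmpIns hnc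
        · have h0 : k ≠ 0 := by
            intro h0; subst h0
            have := h.idx0
            rw [← hd] at this
            omega
          have hidx := h.idxS hk h0
          rw [← hd] at hidx
          rcases lt_or_eq_of_le hud' with hneq | heq
          · have hz1 : coord d (pt d (coord d (b k)) (coord (!d) u)) = coord d (b k) :=
              coord_pt _ _ _
            have hz2 : coord (!d) (pt d (coord d (b k)) (coord (!d) u)) = coord (!d) u :=
              coord_pt' _ _ _
            have hnc : ¬ cmpIns ε (xs k) (T (pt d (coord d (b k)) (coord (!d) u))) := by
              intro hcm
              have := h.min hk _ (by rw [← hd]; exact hz1) hcm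
              rw [← hd] at this
              omega
            exact le_trans (mono' hT d (by omega) (by omega)) (le_of_not_cmpIns hnc)
          · have hc1 := prev_le hT h hk h0
            rw [← hd] at hc1
            calc T u ≤ T (b (k - 1)) := mono' hT d (by omega) (by omega)
              _ = ↑(xs k) := bump_pred h hk h0
    · rw [hR.2 v hov]
      exact le_trans (hRT u) (hT.1 u v h1 h2)
  have lineOK : ∀ (e : Bool) (u v : ℕ × ℕ) (a : A), coord e u = coord e v →
      coord (!e) u < coord (!e) v → R u = (a : WithTop A) → R v = (a : WithTop A) →
      par a = e := by
    intro e u v a hco hco' hu hv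
    have huvne : u ≠ v := fun hh => by rw [hh] at hco'; omega
    rcases exists_or b m u with ⟨k, hk, rfl⟩ | hou
    · have hxa : xs k = a := WithTop.coe_inj.mp (by rw [← hR.1 k hk, hu])
      rcases exists_or b m v with ⟨l, hl, rfl⟩ | hov
      · have hxl : xs l = a := WithTop.coe_inj.mp (by rw [← hR.1 l hl, hv])
        have hkl : k ≠ l := fun hh => huvne (by rw [hh])
        cases hε : ε
        · exfalso
          rcases lt_or_gt_of_ne hkl with hc | hc
          · have := xs_lt_false h hε hc hl; rw [hxa, hxl] at this; exact lt_irrefl _ this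
          · have := xs_lt_false h hε hc hk; rw [hxl, hxa] at this; exact lt_irrefl _ this
        · rcases lt_or_gt_of_ne hkl with hc | hc
          · have hconst : ∀ j, k ≤ j → j ≤ l → xs j = xs k := by
              intro j hj1 hj2
              refine le_antisymm ?_ (xs_le h hj1 (by omega))
              rw [show xs k = xs l by rw [hxa, hxl]]
              exact xs_le h hj2 hl
            have hchain := chain_lt h (e := Bool.xor ε (par (xs k))) hc hl
              (fun j hj1 hj2 => by rw [hconst j (by omega) hj2])
            have hee : e = !(Bool.xor ε (par (xs k))) :=
              bool_ne (fun hh => by rw [hh] at hco; omega)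
            rw [← hxa, hee, hε]
            simp
          · have hconst : ∀ j, l ≤ j → j ≤ k → xs j = xs l := by
              intro j hj1 hj2
              refine le_antisymm ?_ (xs_le h hj1 (by omega))
              rw [show xs l = xs k by rw [hxa, hxl]]
              exact xs_le h hj2 hk
            have hchain := chain_lt h (e := Bool.xor ε (par (xs l))) hc hk
              (fun j hj1 hj2 => by rw [hconst j (by omega) hj2])
            have hee : e = !(Bool.xor ε (par (xs l))) :=
              bool_ne (fun hh => by rw [hh] at hco; omega)
            rw [← hxl, hee, hε]
            simp
      · have hTv : T v = (a : WithTop A) := by rw [← hR.2 v hov, hv]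
        set d := Bool.xor ε (par (xs k)) with hd
        have hpd : d = Bool.xor ε (par a) := by rw [hd, hxa]
        by_cases hed : e = d
        · cases hε : ε
          · rw [hed, hpd, hε]; simp
          · exfalso
            have hmo : T (b k) ≤ T v := by
              refine mono' hT d (le_of_eq ?_) (le_of_lt ?_)
              · rw [← hed]; exact hco
              · have := hco'; rw [hed] at this; exact this
            have hc2 : (↑(xs k) : WithTop A) ≤ T (b k) := cmpIns_le (h.cmp hk)
            have hTb : T (b k) = (a : WithTop A) :=
              le_antisymm (by rw [← hTv]; exact hmo) (by rw [← hxa]; exact hc2)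
            have h4 : par a = d :=
              line_par hT d (by rw [← hed]; exact hco)
                (by have := hco'; rw [hed] at this; exact this) hTb hTv
            rw [hpd, hε] at h4
            cases hpa : par a <;> rw [hpa] at h4 <;> simp at h4
        · have hed' : e = !d := bool_ne hed
          cases hε : ε
          · exfalso
            have hc1 : coord (!d) (b k) = coord (!d) v := by rw [← hed']; exact hco
            have hc2 : coord d (b k) < coord d v := by
              have := hco'; rw [hed', Bool.not_not] at this; exact this
            have hmo : T (b k) ≤ T v := mono' hT d hc2.le hc1.le
            have hlt : (↑(xs k) : WithTop A) < T (b k) := by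
              have := h.cmp hk; rw [hε] at this; simpa [cmpIns] using this
            rw [hTv] at hmo
            have hfin : (↑(xs k) : WithTop A) < ↑a := lt_of_lt_of_le hlt hmo
            rw [← hxa] at hfin
            exact lt_irrefl _ hfin
          · rw [hed', hpd, hε]; simp
    · have hTu : T u = (a : WithTop A) := by rw [← hR.2 u hou, hu]
      rcases exists_or b m v with ⟨k, hk, rfl⟩ | hov
      · have hxa : xs k = a := WithTop.coe_inj.mp (by rw [← hR.1 k hk, hv])
        set d := Bool.xor ε (par (xs k)) with hd
        have hpd : d = Bool.xor ε (par a) := by rw [hd, hxa]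
        by_cases hed : e = d
        · cases hε : ε
          · rw [hed, hpd, hε]; simp
          · exfalso
            have hcm : cmpIns ε (xs k) (T u) := by
              rw [hTu, ← hxa, hε]; simp [cmpIns]
            have := h.min hk u (by rw [← hd, ← hed]; exact hco) hcm
            rw [← hd, ← hed] at this
            omega
        · have hed' : e = !d := bool_ne hed
          cases hε : ε
          · exfalso
            have hc1 : coord (!d) u = coord (!d) (b k) := by rw [← hed']; exact hco
            have hc2 : coord d u < coord d (b k) := by
              have := hco'; rw [hed', Bool.not_not] at this; exact this
            have h0 : k ≠ 0 := by
              intro h0; subst h0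
              have := h.idx0; rw [← hd] at this; omega
            have hidx := h.idxS hk h0; rw [← hd] at hidx
            have hc1' := prev_le hT h hk h0; rw [← hd] at hc1'
            have hbk1 : T (b (k - 1)) = (a : WithTop A) := by rw [bump_pred h hk h0, hxa]
            rcases lt_or_eq_of_le (show coord d u + 1 ≤ coord d (b k) from hc2) with hlt2 | heq2
            · have hdu : coord d u < coord d (b (k - 1)) := by omega
              rcases lt_or_eq_of_le (show coord (!d) u ≤ coord (!d) (b (k - 1)) by omega)
                with hlt3 | heq3
              · exact noSE' hT d hTu hbk1 hdu hlt3
              · have hlp : par a = !d :=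
                  line_par hT (!d) heq3 (by rw [Bool.not_not]; exact hdu) hTu hbk1
                rw [hε] at hpd; simp at hpd
                rw [← hpd] at hlp
                exact bool_ne_not d hlp
            · obtain ⟨-, hbef2⟩ := before hT h hk (v := u) (by rw [hTu, hxa])
                (by rw [← hd]; exact heq2)
              rw [← hd] at hbef2
              have hueq : u = b (k - 1) := eq_of_coord (d := d) (by omega) (by omega)
              exact hou (k - 1) (by omega) hueq
          · rw [hed', hpd, hε]; simp
      · exact line_par hT e hco hco' hTu (by rw [← hR.2 v hov, hv])
  exact ⟨mono1, fun u v a h1 h2 hu hv => lineOK false u v a h1 h2 hu hv,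
    fun u v a h1 h2 hu hv => lineOK true u v a h1 h2 hu hv⟩

lemma superPrec_irrefl (par' : A → Bool) (p : A) : ¬ SuperPrec par' p p := by
  rintro (⟨h1, h2⟩ | ⟨h1, h2, h3⟩ | ⟨h1, h2, h3⟩)
  · rw [h1] at h2; exact absurd h2 (by simp)
  · exact lt_irrefl _ h3
  · exact lt_irrefl _ h3

lemma superPrec_lt {par' : A → Bool} {p q : A} (h : SuperPrec par' p q)
    (hpq : par' p = par' q) :
    (par' p = false ∧ p < q) ∨ (par' p = true ∧ q < p) := by
  rcases h with ⟨h1, h2⟩ | ⟨h1, h2, h3⟩ | ⟨h1, h2, h3⟩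
  · rw [hpq, h2] at h1; exact absurd h1 (by simp)
  · exact Or.inl ⟨h1, h3⟩
  · exact Or.inr ⟨h1, h3⟩

end Aux

section Main
variable [LinearOrder X]

lemma lex_fst_le {p q : X ×ₗ ℕ} (h : p ≤ q) : (ofLex p).1 ≤ (ofLex q).1 := by
  rcases Prod.Lex.le_iff.mp h with h1 | h1
  · exact h1.le
  · exact le_of_eq h1.1

lemma lex_lt_of_fst_lt {p q : X ×ₗ ℕ} (h : (ofLex p).1 < (ofLex q).1) : p < q :=
  Prod.Lex.lt_iff.mpr (Or.inl h)

lemma cmp_equiv {par : X → Bool} {U : ℕ × ℕ → WithTop (X ×ₗ ℕ)} {T : ℕ × ℕ → WithTop X}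
    (hmap : ∀ u, (U u).map (fun p => (ofLex p).1) = T u)
    {ε : Bool} {p : X ×ₗ ℕ} {v : ℕ × ℕ}
    (hrel : ∀ q : X ×ₗ ℕ, U v = (q : WithTop (X ×ₗ ℕ)) → (ofLex q).1 = (ofLex p).1 →
      (if Bool.xor ε (bpar par p) = false then SuperPrec (bpar par) q p
       else SuperPrec (bpar par) p q)) :
    cmpIns ε p (U v) ↔ cmpIns ε ((ofLex p).1) (T v) := by
  cases hU : U v with
  | top =>
    have hT : T v = ⊤ := by rw [← hmap v, hU]; rfl
    rw [hT]
    exact iff_of_true (cmpIns_top ε p) (cmpIns_top ε _)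
  | coe q =>
    have hTq : T v = (((ofLex q).1 : X) : WithTop X) := by rw [← hmap v, hU]; rfl
    rw [hTq]
    rcases lt_trichotomy ((ofLex p).1) ((ofLex q).1) with hlt | heq | hgt
    · exact iff_of_true (cmpIns_of_lt (WithTop.coe_lt_coe.mpr (lex_lt_of_fst_lt hlt)))
        (cmpIns_of_lt (WithTop.coe_lt_coe.mpr hlt))
    · have hq := hrel q hU heq.symm
      have hbq : bpar par q = bpar par p := by unfold bpar; rw [heq]
      cases hε : ε
      · rw [hε] at hq
        have hqlt : q < p := by
          by_cases hbp : bpar par p = false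
          · rw [if_pos (by simp [hbp])] at hq
            rcases superPrec_lt hq hbq with ⟨_, hlt2⟩ | ⟨hb2, _⟩
            · exact hlt2
            · rw [hbq, hbp] at hb2; exact absurd hb2 (by simp)
          · have hbp' : bpar par p = true := by simpa using bool_ne hbp
            rw [if_neg (by simp [hbp'])] at hq
            rcases superPrec_lt hq hbq.symm with ⟨hb2, _⟩ | ⟨_, hlt2⟩
            · rw [hbp'] at hb2; exact absurd hb2 (by simp)
            · exact hlt2
        refine iff_of_false ?_ ?_
        · intro hcm
          have h2 : (p : WithTop (X ×ₗ ℕ)) < ↑q := by simpa [cmpIns] using hcm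
          exact absurd (WithTop.coe_lt_coe.mp h2) (asymm hqlt)
        · intro hcm
          have h2 : (((ofLex p).1 : X) : WithTop X) < ↑((ofLex q).1) := by
            simpa [cmpIns] using hcm
          rw [WithTop.coe_lt_coe, heq] at h2
          exact lt_irrefl _ h2
      · rw [hε] at hq
        have hplt : p < q := by
          by_cases hbp : bpar par p = false
          · rw [if_neg (by simp [hbp])] at hq
            rcases superPrec_lt hq hbq.symm with ⟨_, hlt2⟩ | ⟨hb2, _⟩
            · exact hlt2
            · rw [hbp] at hb2; exact absurd hb2 (by simp)
          · have hbp' : bpar par p = true := by simpa using bool_ne hbp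
            rw [if_pos (by simp [hbp'])] at hq
            rcases superPrec_lt hq hbq with ⟨hb2, _⟩ | ⟨_, hlt2⟩
            · rw [hbq, hbp'] at hb2; exact absurd hb2 (by simp)
            · exact hlt2
        refine iff_of_true ?_ ?_
        · simpa [cmpIns] using WithTop.coe_le_coe.mpr hplt.le
        · simp [cmpIns, heq]
    · refine iff_of_false ?_ ?_
      · intro hcm
        have h2 := WithTop.coe_le_coe.mp (cmpIns_le hcm)
        exact absurd (lex_fst_le h2) (not_le.mpr hgt)
      · intro hcm
        have h2 := WithTop.coe_le_coe.mp (cmpIns_le hcm)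
        exact absurd h2 (not_le.mpr hgt)

lemma inv_lemma {par : X → Bool} {U : ℕ × ℕ → WithTop (X ×ₗ ℕ)} {T : ℕ × ℕ → WithTop X}
    (hUT : IsBulletStd par U T) {ε : Bool} {y : X ×ₗ ℕ}
    (hy : ∀ (u : ℕ × ℕ) (p : X ×ₗ ℕ), U u = (p : WithTop (X ×ₗ ℕ)) →
      (ofLex p).1 = (ofLex y).1 →
      (if Bool.xor ε (bpar par y) = false then SuperPrec (bpar par) p y
       else SuperPrec (bpar par) y p))
    {b : ℕ → ℕ × ℕ} {xs : ℕ → X ×ₗ ℕ} {m : ℕ}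
    (h : BumpSeq ε (bpar par) U y b xs m) :
    ∀ j, j < m → ∀ (v : ℕ × ℕ) (q : X ×ₗ ℕ),
      coord (Bool.xor ε (bpar par (xs j))) v = coord (Bool.xor ε (bpar par (xs j))) (b j) →
      U v = (q : WithTop (X ×ₗ ℕ)) → (ofLex q).1 = (ofLex (xs j)).1 →
      (if Bool.xor ε (bpar par (xs j)) = false then SuperPrec (bpar par) q (xs j)
       else SuperPrec (bpar par) (xs j) q) := by
  intro j hj v q hline hU hhat
  cases j with
  | zero =>
    rw [h.x0] at hhat ⊢
    exact hy v q hU hhat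
  | succ i =>
    have hw : U (b i) = ((xs (i + 1)) : WithTop (X ×ₗ ℕ)) := h.bump hj
    have hTw : T (b i) = (((ofLex (xs (i + 1))).1 : X) : WithTop X) := by
      rw [← hUT.2.2.1, hw]; rfl
    have hTv : T v = (((ofLex (xs (i + 1))).1 : X) : WithTop X) := by
      rw [← hUT.2.2.1, hU, ← hhat]; rfl
    set d := Bool.xor ε (bpar par (xs (i + 1))) with hd
    have hidx := h.idxS hj (Nat.succ_ne_zero i)
    rw [← hd, show i + 1 - 1 = i from rfl] at hidx
    have hlv : coord d v = coord d (b i) + 1 := by omega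
    have hother : coord (!d) v ≤ coord (!d) (b i) := by
      by_contra hgt
      push_neg at hgt
      exact noSE' hUT.2.1 d hTw hTv (by omega) hgt
    have hvw : v ≠ b i := fun hh => by rw [hh] at hlv; omega
    by_cases hdd : d = false
    · rw [if_pos hdd]
      rw [hdd] at hlv hother
      simp only [Bool.not_false, Bool.not_true, coord_false, coord_true] at hlv hother
      exact hUT.2.2.2 v (b i) q (xs (i + 1)) hvw (by omega) hother hU hw hhat
    · have hdd' : d = true := by simpa using bool_ne hdd
      rw [if_neg (by rw [hdd']; simp)]
      rw [hdd'] at hlv hother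
      simp only [Bool.not_false, Bool.not_true, coord_false, coord_true] at hlv hother
      exact hUT.2.2.2 (b i) v (xs (i + 1)) q (Ne.symm hvw) hother (by omega) hw hU hhat.symm

end Main

/-- Standardization compatibility of insertion: if `y ∈ X•` is `≻` (resp. `≺`) every
letter of `U` with the same underlying letter, when `ε` plus the parity of `y` is `0`
(resp. `1`), then inserting `y` into `U` and inserting the underlying letter of `y`
into `T` have identical bumped node sequences, and the resulting tableaux form a
`•`-standardization pair. -/
theorem stmt15 [LinearOrder X] (ε : Bool) (par : X → Bool)
    (U : ℕ × ℕ → WithTop (X ×ₗ ℕ)) (T : ℕ × ℕ → WithTop X)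
    (hUT : IsBulletStd par U T) (y : X ×ₗ ℕ)
    (hy : ∀ (u : ℕ × ℕ) (p : X ×ₗ ℕ), U u = (p : WithTop (X ×ₗ ℕ)) →
      (ofLex p).1 = (ofLex y).1 →
      (if Bool.xor ε (bpar par y) = false then SuperPrec (bpar par) p y
       else SuperPrec (bpar par) y p))
    (b : ℕ → ℕ × ℕ) (xs : ℕ → X ×ₗ ℕ) (m : ℕ)
    (hb : BumpSeq ε (bpar par) U y b xs m)
    (b' : ℕ → ℕ × ℕ) (xs' : ℕ → X) (m' : ℕ)
    (hb' : BumpSeq ε par T ((ofLex y).1) b' xs' m') :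
    m = m' ∧ (∀ j, j < m → b j = b' j) ∧
    ∀ (V : ℕ × ℕ → WithTop (X ×ₗ ℕ)) (S : ℕ × ℕ → WithTop X),
      InsResult U b xs m V → InsResult T b' xs' m' S → IsBulletStd par V S := by
  classical
  have hmapv : ∀ u, (U u).map (fun p => (ofLex p).1) = T u := hUT.2.2.1
  have hTs : IsSStd par T := hUT.2.1
  have hcond4 := hUT.2.2.2
  have key : ∀ j, j < m → j < m' → (ofLex (xs j)).1 = xs' j ∧ b j = b' j := by
    intro j
    induction j using Nat.strong_induction_on with
    | _ j ih =>
      intro hjm hjm'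
      have hhat : (ofLex (xs j)).1 = xs' j := by
        cases j with
        | zero => rw [hb.x0, hb'.x0]
        | succ i =>
          have h1 : U (b i) = ((xs (i + 1)) : WithTop (X ×ₗ ℕ)) := hb.bump hjm
          have h2 : T (b' i) = ((xs' (i + 1)) : WithTop X) := hb'.bump hjm'
          have h3 := (ih i (by omega) (by omega) (by omega)).2
          have h4 : T (b i) = (((ofLex (xs (i + 1))).1 : X) : WithTop X) := by
            rw [← hmapv, h1]; rfl
          rw [h3, h2] at h4
          exact (WithTop.coe_inj.mp h4).symm
      refine ⟨hhat, ?_⟩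
      have hdU : Bool.xor ε (bpar par (xs j)) = Bool.xor ε (par (xs' j)) := by
        unfold bpar; rw [hhat]
      set d := Bool.xor ε (par (xs' j)) with hd
      have hline : coord d (b j) = coord d (b' j) := by
        have e1 := hb.idx hjm
        rw [hdU] at e1
        have e2 := hb'.idx hjm'
        rw [← hd] at e2
        cases j with
        | zero => rw [e1, e2, if_pos rfl, if_pos rfl]
        | succ i =>
          rw [e1, e2]
          rw [if_neg (Nat.succ_ne_zero i), if_neg (Nat.succ_ne_zero i)]
          rw [show i + 1 - 1 = i from rfl, (ih i (by omega) (by omega) (by omega)).2]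
      have hcm1 : cmpIns ε (xs j) (U (b' j)) := by
        refine (cmp_equiv (par := par) hmapv ?_).mpr ?_
        · intro q hqq hhq
          exact inv_lemma hUT hy hb j hjm (b' j) q (by rw [hdU]; exact hline.symm) hqq hhq
        · rw [hhat]; exact hb'.cmp hjm'
      have hcm2 : cmpIns ε (xs' j) (T (b j)) := by
        have := (cmp_equiv hmapv
          (fun q hqq hhq => inv_lemma hUT hy hb j hjm (b j) q rfl hqq hhq)).mp (hb.cmp hjm)
        rwa [hhat] at this
      have hle1 := hb.min hjm (b' j) (by rw [hdU]; exact hline.symm) hcm1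
      rw [hdU] at hle1
      have hle2 := hb'.min hjm' (b j) (by rw [← hd]; exact hline) hcm2
      rw [← hd] at hle2
      exact eq_of_coord (d := d) hline (le_antisymm hle1 hle2)
  have hmm : m = m' := by
    rcases Nat.lt_trichotomy m m' with hlt | heq | hlt
    · exfalso
      have hj : m - 1 < m := by have := hb.pos; omega
      have hbe := (key (m - 1) hj (by omega)).2
      have hT1 : T (b (m - 1)) = ⊤ := by rw [← hmapv, hb.top]; rfl
      have hT2 : T (b' (m - 1)) = ((xs' (m - 1 + 1)) : WithTop X) := hb'.bump (by omega)
      rw [← hbe, hT1] at hT2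
      exact WithTop.coe_ne_top hT2.symm
    · exact heq
    · exfalso
      have hj : m' - 1 < m' := by have := hb'.pos; omega
      have hbe := (key (m' - 1) (by omega) hj).2
      have hT2 : U (b (m' - 1)) = ((xs (m' - 1 + 1)) : WithTop (X ×ₗ ℕ)) := hb.bump (by omega)
      have hT3 : T (b (m' - 1)) = (((ofLex (xs (m' - 1 + 1))).1 : X) : WithTop X) := by
        rw [← hmapv, hT2]; rfl
      rw [hbe, hb'.top] at hT3
      exact WithTop.coe_ne_top hT3.symm
  subst hmm
  refine ⟨rfl, fun j hj => (key j hj hj).2, ?_⟩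
  intro V S hV hS
  have hxst : ∀ j, j + 1 < m → xs j < xs (j + 1) := by
    intro j hj1
    have hcm := hb.cmp (show j < m by omega)
    rw [hb.bump hj1] at hcm
    cases hε : ε
    · rw [hε] at hcm
      exact WithTop.coe_lt_coe.mp (by simpa [cmpIns] using hcm)
    · rw [hε] at hcm
      have hle : xs j ≤ xs (j + 1) := WithTop.coe_le_coe.mp (by simpa [cmpIns] using hcm)
      rcases lt_or_eq_of_le hle with hgood | heq
      · exact hgood
      · exfalso
        have hUj : U (b j) = ((xs j) : WithTop (X ×ₗ ℕ)) := by rw [hb.bump hj1, ← heq]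
        cases j with
        | zero =>
          rw [hb.x0] at hUj
          have := hy (b 0) y hUj rfl
          split_ifs at this <;> exact superPrec_irrefl _ _ this
        | succ i =>
          have h1 : U (b i) = ((xs (i + 1)) : WithTop (X ×ₗ ℕ)) := hb.bump (by omega)
          have h2 : b i = b (i + 1) := hUT.1.2 (b i) (b (i + 1)) (xs (i + 1)) h1 hUj
          have hidx := hb.idxS (show i + 1 < m by omega) (Nat.succ_ne_zero i)
          rw [show i + 1 - 1 = i from rfl, ← h2] at hidx
          omega
  have hxch : ∀ {k l}, k < l → l < m → xs k < xs l := by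
    intro k l hkl hl
    exact lt_of_lt_of_le (hxst k (by omega)) (xs_le hb (by omega) hl)
  have hob : ∀ (u : ℕ × ℕ) (k : ℕ), k < m → (∀ k', k' < m → u ≠ b k') →
      U u = ((xs k) : WithTop (X ×ₗ ℕ)) → False := by
    intro u k hk ho hu
    cases k with
    | zero =>
      rw [hb.x0] at hu
      have := hy u y hu rfl
      split_ifs at this <;> exact superPrec_irrefl _ _ this
    | succ i =>
      have h1 : U (b i) = ((xs (i + 1)) : WithTop (X ×ₗ ℕ)) := hb.bump hk
      exact ho i (by omega) (hUT.1.2 u (b i) (xs (i + 1)) hu h1)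
  have hVdist : ∀ (u v : ℕ × ℕ) (p : X ×ₗ ℕ), V u = (p : WithTop (X ×ₗ ℕ)) →
      V v = (p : WithTop (X ×ₗ ℕ)) → u = v := by
    intro u v p hu hv
    rcases exists_or b m u with ⟨k, hk, rfl⟩ | hou <;>
      rcases exists_or b m v with ⟨l, hl, rfl⟩ | hov
    · have h1 : xs k = p := WithTop.coe_inj.mp (by rw [← hV.1 k hk, hu])
      have h2 : xs l = p := WithTop.coe_inj.mp (by rw [← hV.1 l hl, hv])
      have hkl : k = l := by
        by_contra hne
        rcases lt_or_gt_of_ne hne with hc | hc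
        · have := hxch hc hl; rw [h1, h2] at this; exact lt_irrefl _ this
        · have := hxch hc hk; rw [h1, h2] at this; exact lt_irrefl _ this
      rw [hkl]
    · exfalso
      have h1 : xs k = p := WithTop.coe_inj.mp (by rw [← hV.1 k hk, hu])
      have h2 : U v = ((xs k) : WithTop (X ×ₗ ℕ)) := by rw [← hV.2 v hov, hv, h1]
      exact hob v k hk hov h2
    · exfalso
      have h1 : xs l = p := WithTop.coe_inj.mp (by rw [← hV.1 l hl, hv])
      have h2 : U u = ((xs l) : WithTop (X ×ₗ ℕ)) := by rw [← hV.2 u hou, hu, h1]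
      exact hob u l hl hou h2
    · exact hUT.1.2 u v p (by rw [← hV.2 u hou, hu]) (by rw [← hV.2 v hov, hv])
  have hmapVS : ∀ u, (V u).map (fun p => (ofLex p).1) = S u := by
    intro u
    rcases exists_or b m u with ⟨k, hk, rfl⟩ | ho
    · have h1 : S (b k) = ((xs' k) : WithTop X) := by
        rw [(key k hk hk).2]; exact hS.1 k hk
      rw [hV.1 k hk, h1, ← (key k hk hk).1]; rfl
    · rw [hV.2 u ho, hS.2 u (fun k hk hh => ho k hk (hh.trans (key k hk hk).2.symm)), hmapv]
  have hSmap : ∀ (w : ℕ × ℕ) (q : X ×ₗ ℕ), U w = (q : WithTop (X ×ₗ ℕ)) →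
      T w = (((ofLex q).1 : X) : WithTop X) := fun w q hq => by rw [← hmapv, hq]; rfl
  have hcond4V : ∀ (u v : ℕ × ℕ) (p q : X ×ₗ ℕ), u ≠ v → v.1 ≤ u.1 → u.2 ≤ v.2 →
      V u = (p : WithTop (X ×ₗ ℕ)) → V v = (q : WithTop (X ×ₗ ℕ)) →
      (ofLex p).1 = (ofLex q).1 → SuperPrec (bpar par) p q := by
    intro u v p q hne h1 h2 hp hq hpq
    rcases exists_or b m u with ⟨k, hk, rfl⟩ | hou <;>
      rcases exists_or b m v with ⟨l, hl, rfl⟩ | hov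
    · -- both bumped
      have hpk : xs k = p := WithTop.coe_inj.mp (by rw [← hV.1 k hk, hp])
      have hql : xs l = q := WithTop.coe_inj.mp (by rw [← hV.1 l hl, hq])
      have hkl : k ≠ l := fun hh => hne (by rw [hh])
      have hhk := (key k hk hk).1
      have hhl := (key l hl hl).1
      have hkl' : xs' k = xs' l := by rw [← hhk, ← hhl, hpk, hql, hpq]
      have hbp : bpar par p = par (xs' k) := by unfold bpar; rw [← hpk, hhk]
      have hbq : bpar par q = par (xs' k) := by unfold bpar; rw [← hql, hhl, ← hkl']
      cases hε : ε
      · exfalso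
        rcases lt_or_gt_of_ne hkl with hc | hc
        · have := xs_lt_false hb' hε hc hl; rw [hkl'] at this; exact lt_irrefl _ this
        · have := xs_lt_false hb' hε hc hk; rw [← hkl'] at this; exact lt_irrefl _ this
      · rcases lt_or_gt_of_ne hkl with hc | hc
        · have hconst : ∀ j, k ≤ j → j ≤ l → xs' j = xs' k := by
            intro j hj1 hj2
            refine le_antisymm ?_ (xs_le hb' hj1 (by omega))
            rw [hkl']; exact xs_le hb' hj2 hl
          have hchain := chain_lt hb (e := Bool.xor ε (par (xs' k))) hc hl
            (fun j hj1 hj2 => by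
              rw [show bpar par (xs j) = par (xs' j) from by
                unfold bpar; rw [(key j (by omega) (by omega)).1]]
              rw [hconst j (by omega) hj2])
          have hpe : par (xs' k) = false := by
            by_contra hpp
            have hpp' : par (xs' k) = true := by simpa using bool_ne hpp
            rw [hε, hpp'] at hchain
            simp only [Bool.true_xor, Bool.not_false, Bool.not_true, coord_false,
              coord_true] at hchain
            omega
          rw [hε, hpe] at hchain
          simp only [Bool.true_xor, Bool.not_false, Bool.not_true, coord_false,
            coord_true] at hchain
          refine Or.inr (Or.inl ⟨by rw [hbp, hpe], by rw [hbq, hpe], ?_⟩)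
          rw [← hpk, ← hql]
          exact hxch hc hl
        · have hconst : ∀ j, l ≤ j → j ≤ k → xs' j = xs' l := by
            intro j hj1 hj2
            refine le_antisymm ?_ (xs_le hb' hj1 (by omega))
            rw [← hkl']; exact xs_le hb' hj2 hk
          have hchain := chain_lt hb (e := Bool.xor ε (par (xs' l))) hc hk
            (fun j hj1 hj2 => by
              rw [show bpar par (xs j) = par (xs' j) from by
                unfold bpar; rw [(key j (by omega) (by omega)).1]]
              rw [hconst j (by omega) hj2])
          have hpe : par (xs' l) = true := by
            by_contra hpp
            have hpp' : par (xs' l) = false := by simpa using bool_ne hpp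
            rw [hε, hpp'] at hchain
            simp only [Bool.true_xor, Bool.not_false, Bool.not_true, coord_false,
              coord_true] at hchain
            omega
          rw [hε, hpe] at hchain
          simp only [Bool.true_xor, Bool.not_false, Bool.not_true, coord_false,
            coord_true] at hchain
          refine Or.inr (Or.inr ⟨by rw [hbp, hkl', hpe], by rw [hbq, hkl', hpe], ?_⟩)
          rw [← hpk, ← hql]
          exact hxch hc hk
    · -- u = b k bumped, v original
      have hpk : xs k = p := WithTop.coe_inj.mp (by rw [← hV.1 k hk, hp])
      have hUv : U v = (q : WithTop (X ×ₗ ℕ)) := by rw [← hV.2 v hov, hq]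
      have hhk := (key k hk hk).1
      have hbk : b k = b' k := (key k hk hk).2
      have hTv : T v = ((xs' k : X) : WithTop X) := by
        rw [hSmap v q hUv, ← hpq, ← hpk, hhk]
      set d := Bool.xor ε (par (xs' k)) with hd
      by_cases hdd : d = false
      · by_cases hr : v.1 = (b k).1
        · exfalso
          have hvc : (b k).2 < v.2 := lt_of_le_of_ne h2 (fun hh => hne (Prod.ext hr.symm hh))
          have hmo : T (b' k) ≤ T v := hTs.1 _ _ (by rw [← hbk, hr]) (by rw [← hbk]; exact h2)
          cases hε : ε
          · have hcmp := hb'.cmp hk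
            rw [hε] at hcmp
            have hlt : ((xs' k : X) : WithTop X) < T (b' k) := by simpa [cmpIns] using hcmp
            rw [hTv] at hmo
            exact lt_irrefl _ (lt_of_lt_of_le hlt hmo)
          · have hcl : ((xs' k : X) : WithTop X) ≤ T (b' k) := cmpIns_le (hb'.cmp hk)
            have hTb : T (b' k) = ((xs' k : X) : WithTop X) :=
              le_antisymm (by rw [← hTv]; exact hmo) hcl
            have hlp : par (xs' k) = false :=
              line_par hTs false (u := b' k) (v := v) (by rw [← hbk]; exact hr.symm)
                (by rw [← hbk]; exact hvc) hTb hTv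
            have hcontr := hdd
            rw [hd, hε, hlp] at hcontr
            simp at hcontr
        · have hvr : v.1 < (b k).1 := lt_of_le_of_ne h1 hr
          rw [hbk] at hvr
          have h0 : k ≠ 0 := by
            intro h0; subst h0
            have hI := hb'.idx0
            rw [← hd, hdd] at hI
            simp only [Bool.not_false, Bool.not_true, coord_false, coord_true] at hI
            omega
          have hidx := hb'.idxS hk h0
          rw [← hd, hdd] at hidx
          simp only [Bool.not_false, Bool.not_true, coord_false, coord_true] at hidx
          have hc1 := prev_le hTs hb' hk h0
          rw [← hd, hdd] at hc1
          simp only [Bool.not_false, Bool.not_true, coord_false, coord_true] at hc1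
          have hbk1 : T (b' (k - 1)) = ((xs' k : X) : WithTop X) := bump_pred hb' hk h0
          have hge : (b' (k - 1)).2 ≤ v.2 := by
            by_contra hlt3
            push_neg at hlt3
            rcases lt_or_eq_of_le (show v.1 ≤ (b' (k - 1)).1 by omega) with ha | ha
            · exact noSE hTs hTv hbk1 ha hlt3
            · obtain ⟨-, hbef2⟩ := before hTs hb' hk (v := v) hTv
                (by rw [← hd, hdd]; simp only [coord_false]; omega)
              rw [← hd, hdd] at hbef2
              simp only [Bool.not_false, Bool.not_true, coord_false, coord_true] at hbef2
              omega
          have hkm1 : b (k - 1) = b' (k - 1) := (key (k - 1) (by omega) (by omega)).2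
          have hUbk1 : U (b (k - 1)) = ((xs k) : WithTop (X ×ₗ ℕ)) := bump_pred hb hk h0
          have hne2 : b (k - 1) ≠ v := fun hh => hov (k - 1) (by omega) hh.symm
          have hfin := hcond4 (b (k - 1)) v (xs k) q hne2
            (by rw [hkm1]; omega) (by rw [hkm1]; exact hge) hUbk1 hUv
            (by rw [hpk]; exact hpq)
          rw [hpk] at hfin
          exact hfin
      · have hdd' : d = true := by simpa using bool_ne hdd
        by_cases h0 : k = 0
        · subst h0
          have hxy : xs 0 = y := hb.x0
          have hcnd : Bool.xor ε (bpar par y) = d := by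
            rw [hd]; unfold bpar; rw [← hb'.x0]
          have hrel := hy v q hUv (by rw [← hpq, ← hpk, hxy])
          rw [if_neg (by rw [hcnd, hdd']; simp)] at hrel
          rw [← hxy, hpk] at hrel
          exact hrel
        · have hidx := hb'.idxS hk h0
          rw [← hd, hdd'] at hidx
          simp only [Bool.not_false, Bool.not_true, coord_false, coord_true] at hidx
          have hc1 := prev_le hTs hb' hk h0
          rw [← hd, hdd'] at hc1
          simp only [Bool.not_false, Bool.not_true, coord_false, coord_true] at hc1
          have hkm1 : b (k - 1) = b' (k - 1) := (key (k - 1) (by omega) (by omega)).2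
          have hUbk1 : U (b (k - 1)) = ((xs k) : WithTop (X ×ₗ ℕ)) := bump_pred hb hk h0
          have hne2 : b (k - 1) ≠ v := fun hh => hov (k - 1) (by omega) hh.symm
          rw [hbk] at h1 h2
          have hfin := hcond4 (b (k - 1)) v (xs k) q hne2
            (by rw [hkm1]; omega) (by rw [hkm1]; omega) hUbk1 hUv
            (by rw [hpk]; exact hpq)
          rw [hpk] at hfin
          exact hfin
    · -- u original, v = b l bumped
      have hql : xs l = q := WithTop.coe_inj.mp (by rw [← hV.1 l hl, hq])
      have hUu : U u = (p : WithTop (X ×ₗ ℕ)) := by rw [← hV.2 u hou, hp]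
      have hhl := (key l hl hl).1
      have hbl : b l = b' l := (key l hl hl).2
      have hTu : T u = ((xs' l : X) : WithTop X) := by
        rw [hSmap u p hUu, hpq, ← hql, hhl]
      set d := Bool.xor ε (par (xs' l)) with hd
      by_cases hdd : d = false
      · by_cases h0 : l = 0
        · subst h0
          have hxy : xs 0 = y := hb.x0
          have hcnd : Bool.xor ε (bpar par y) = d := by
            rw [hd]; unfold bpar; rw [← hb'.x0]
          have hrel := hy u p hUu (by rw [hpq, ← hql, hxy])
          rw [if_pos (by rw [hcnd, hdd])] at hrel
          rw [← hxy, hql] at hrel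
          exact hrel
        · have hidx := hb'.idxS hl h0
          rw [← hd, hdd] at hidx
          simp only [Bool.not_false, Bool.not_true, coord_false, coord_true] at hidx
          have hc1 := prev_le hTs hb' hl h0
          rw [← hd, hdd] at hc1
          simp only [Bool.not_false, Bool.not_true, coord_false, coord_true] at hc1
          have hkm1 : b (l - 1) = b' (l - 1) := (key (l - 1) (by omega) (by omega)).2
          have hUbl1 : U (b (l - 1)) = ((xs l) : WithTop (X ×ₗ ℕ)) := bump_pred hb hl h0
          have hne2 : u ≠ b (l - 1) := fun hh => hou (l - 1) (by omega) hh
          rw [hbl] at h1 h2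
          have hfin := hcond4 u (b (l - 1)) p (xs l) hne2
            (by rw [hkm1]; omega) (by rw [hkm1]; omega) hUu hUbl1
            (by rw [hql]; exact hpq)
          rw [hql] at hfin
          exact hfin
      · have hdd' : d = true := by simpa using bool_ne hdd
        by_cases hcc : u.2 = (b l).2
        · exfalso
          have hrt : (b l).1 < u.1 := lt_of_le_of_ne h1 (fun hh => hne (Prod.ext hh.symm hcc))
          have hmo : T (b' l) ≤ T u :=
            hTs.1 _ _ (by rw [← hbl]; exact h1) (le_of_eq (by rw [← hbl, hcc]))
          cases hε : ε
          · have hcmp := hb'.cmp hl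
            rw [hε] at hcmp
            have hlt : ((xs' l : X) : WithTop X) < T (b' l) := by simpa [cmpIns] using hcmp
            rw [hTu] at hmo
            exact lt_irrefl _ (lt_of_lt_of_le hlt hmo)
          · have hcl : ((xs' l : X) : WithTop X) ≤ T (b' l) := cmpIns_le (hb'.cmp hl)
            have hTb : T (b' l) = ((xs' l : X) : WithTop X) :=
              le_antisymm (by rw [← hTu]; exact hmo) hcl
            have hlp : par (xs' l) = true :=
              line_par hTs true (u := b' l) (v := u) (by rw [← hbl]; exact hcc.symm)
                (by rw [← hbl]; exact hrt) hTb hTu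
            have hcontr := hdd'
            rw [hd, hε, hlp] at hcontr
            simp at hcontr
        · have hcl2 : u.2 < (b l).2 := lt_of_le_of_ne h2 hcc
          rw [hbl] at hcl2
          have h0 : l ≠ 0 := by
            intro h0; subst h0
            have hI := hb'.idx0
            rw [← hd, hdd'] at hI
            simp only [Bool.not_false, Bool.not_true, coord_false, coord_true] at hI
            omega
          have hidx := hb'.idxS hl h0
          rw [← hd, hdd'] at hidx
          simp only [Bool.not_false, Bool.not_true, coord_false, coord_true] at hidx
          have hc1 := prev_le hTs hb' hl h0
          rw [← hd, hdd'] at hc1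
          simp only [Bool.not_false, Bool.not_true, coord_false, coord_true] at hc1
          have hbk1 : T (b' (l - 1)) = ((xs' l : X) : WithTop X) := bump_pred hb' hl h0
          have hge : (b' (l - 1)).1 ≤ u.1 := by
            by_contra hlt3
            push_neg at hlt3
            rcases lt_or_eq_of_le (show u.2 ≤ (b' (l - 1)).2 by omega) with ha | ha
            · exact noSE hTs hTu hbk1 hlt3 ha
            · obtain ⟨-, hbef2⟩ := before hTs hb' hl (v := u) hTu
                (by rw [← hd, hdd']; simp only [coord_true]; omega)
              rw [← hd, hdd'] at hbef2
              simp only [Bool.not_false, Bool.not_true, coord_false, coord_true] at hbef2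
              omega
          have hkm1 : b (l - 1) = b' (l - 1) := (key (l - 1) (by omega) (by omega)).2
          have hUbl1 : U (b (l - 1)) = ((xs l) : WithTop (X ×ₗ ℕ)) := bump_pred hb hl h0
          have hne2 : u ≠ b (l - 1) := fun hh => hou (l - 1) (by omega) hh
          have hfin := hcond4 u (b (l - 1)) p (xs l) hne2
            (by rw [hkm1]; exact hge) (by rw [hkm1]; omega) hUu hUbl1
            (by rw [hql]; exact hpq)
          rw [hql] at hfin
          exact hfin
    · exact hcond4 u v p q hne h1 h2 (by rw [← hV.2 u hou, hp]) (by rw [← hV.2 v hov, hq]) hpq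
  exact ⟨⟨sstd_ins hUT.1.1 hb hV, hVdist⟩, sstd_ins hTs hb' hS, hmapVS, hcond4V⟩


end SuperRSK
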